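/- arXiv:1408.2117 — 2 statements merged into one kernel-verified Lean document; each statement's English description precedes it below -/
import Mathlib

section
/- Let T be a stable tree marked by X, let v and v' be two vertices of T joined by a path, with e the edge at v on the path [v,v'] and e' the edge at v' on this path. Then for every edge e'' at v' other than e', the set B_{v'}(e'') ∩ X is a strict subset of B_v(e) ∩ X. -/
open SimpleGraph

/-- The branch of a vertex `v` in the direction of a neighbor `u`. -/
def Branch {V : Type*} (G : SimpleGraph V) (v u : V) : Set V :=
  {w | ∃ p : G.Walk u w, v ∉ p.support}

/-- A stable combinatorial tree marked by `X`. -/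
structure MarkedStableTree (X V : Type*) (G : SimpleGraph V) (m : X → V) : Prop where
  tree : G.IsTree
  inj : Function.Injective m
  leaf_iff : ∀ v, (G.neighborSet v).ncard = 1 ↔ v ∈ Set.range m
  stable : ∀ v, v ∉ Set.range m → 3 ≤ (G.neighborSet v).ncard

section Aux

variable {V : Type*} {G : SimpleGraph V}

lemma self_mem_branch {v u : V} (h : v ≠ u) : u ∈ Branch G v u :=
  ⟨Walk.nil, by simp [h]⟩

lemma not_mem_branch_start (v u : V) : v ∉ Branch G v u := by
  rintro ⟨q, hq⟩; exact hq q.end_mem_support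

/-- In a tree, branches at a vertex in the directions of two different neighbors
are disjoint. -/
lemma branch_dir_eq (ht : G.IsTree) {c u w z : V} (hu : G.Adj c u) (hw : G.Adj c w)
    (h1 : z ∈ Branch G c u) (h2 : z ∈ Branch G c w) : u = w := by
  classical
  obtain ⟨q1, hq1⟩ := h1
  obtain ⟨q2, hq2⟩ := h2
  have hb1 : c ∉ q1.bypass.support := fun hmem => hq1 (q1.support_bypass_subset hmem)
  have hb2 : c ∉ q2.bypass.support := fun hmem => hq2 (q2.support_bypass_subset hmem)
  have P1 : (Walk.cons hu q1.bypass).IsPath := by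
    rw [Walk.cons_isPath_iff]; exact ⟨q1.bypass_isPath, hb1⟩
  have P2 : (Walk.cons hw q2.bypass).IsPath := by
    rw [Walk.cons_isPath_iff]; exact ⟨q2.bypass_isPath, hb2⟩
  obtain ⟨p0, -, huniq⟩ := ht.existsUnique_path c z
  have heq : Walk.cons hu q1.bypass = Walk.cons hw q2.bypass :=
    (huniq _ P1).trans (huniq _ P2).symm
  have hs := congrArg Walk.support heq
  rw [Walk.support_cons, Walk.support_cons, q1.bypass.support_eq_cons,
    q2.bypass.support_eq_cons] at hs
  exact (List.cons.injEq _ _ _ _).mp ((List.cons.injEq _ _ _ _).mp hs).2 |>.1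

/-- If `c` lies in the branch `B_v(s)` and `v` is outside the branch `B_c(u)`,
then the whole branch `B_c(u)` is contained in `B_v(s)`. -/
lemma branch_subset_branch {v s c u : V} (hadj : G.Adj c u)
    (hc : c ∈ Branch G v s) (hv1 : v ∉ Branch G c u) (hv2 : v ≠ c) :
    Branch G c u ⊆ Branch G v s := by
  classical
  rintro z ⟨q, hq⟩
  obtain ⟨r, hr⟩ := hc
  refine ⟨r.append (Walk.cons hadj q), ?_⟩
  rw [Walk.mem_support_append_iff, Walk.support_cons]
  rintro (hvr | hv)
  · exact hr hvr
  · rcases List.mem_cons.mp hv with h | hvq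
    · exact hv2 h
    · exact hv1 ⟨q.takeUntil v hvq, fun hmem => hq (q.support_takeUntil_subset hvq hmem)⟩

/-- If `r` is a nontrivial path from `a` to `b`, then `b` lies in the branch of `a`
in the direction of the second vertex of `r`. -/
lemma end_mem_branch_getVert_one {a b : V} (r : G.Walk a b) (hr : r.IsPath) (hab : a ≠ b) :
    b ∈ Branch G a (r.getVert 1) := by
  cases r with
  | nil => exact absurd rfl hab
  | @cons _ c _ h q =>
    rw [Walk.cons_isPath_iff] at hr
    have : (Walk.cons h q).getVert 1 = c := by
      rw [Walk.getVert_cons_succ]; exact q.getVert_zero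
    rw [this]
    exact ⟨q, hr.2⟩

/-- Every branch of a marked stable tree contains a marked point. -/
lemma exists_marked_in_branch [Finite V] {X : Type*} {m : X → V}
    (ht : G.IsTree) (hleaf : ∀ v, (G.neighborSet v).ncard = 1 ↔ v ∈ Set.range m)
    (hstable : ∀ v, v ∉ Set.range m → 3 ≤ (G.neighborSet v).ncard) :
    ∀ c u : V, G.Adj c u → ∃ x, m x ∈ Branch G c u := by
  have main : ∀ n : ℕ, ∀ c u : V, G.Adj c u → (Branch G c u).ncard ≤ n →
      ∃ x, m x ∈ Branch G c u := by
    intro n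
    induction n with
    | zero =>
      intro c u hadj h0
      have hmem : u ∈ Branch G c u := self_mem_branch hadj.ne
      have : 0 < (Branch G c u).ncard :=
        (Set.ncard_pos (Set.toFinite _)).mpr ⟨u, hmem⟩
      omega
    | succ n ih =>
      intro c u hadj hle
      by_cases hu : u ∈ Set.range m
      · obtain ⟨x, rfl⟩ := hu
        exact ⟨x, self_mem_branch hadj.ne⟩
      · have h3 := hstable u hu
        have hnb : ∃ b ∈ G.neighborSet u, b ≠ c := by
          by_contra hcon
          push_neg at hcon
          have hsub : G.neighborSet u ⊆ {c} := fun b hb => hcon b hb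
          have := Set.ncard_le_ncard hsub (Set.finite_singleton c)
          rw [Set.ncard_singleton] at this
          omega
        obtain ⟨b, hb, hbc⟩ := hnb
        have hub : G.Adj u b := hb
        have hcnot : c ∉ Branch G u b := fun hcmem =>
          hbc (branch_dir_eq ht hub (G.adj_symm hadj) hcmem
            (self_mem_branch hadj.ne'))
        have hsub : Branch G u b ⊆ Branch G c u :=
          branch_subset_branch hub (self_mem_branch hadj.ne) hcnot hadj.ne
        have hss : Branch G u b ⊂ Branch G c u :=
          ⟨hsub, fun hsup => not_mem_branch_start u b (hsup (self_mem_branch hadj.ne))⟩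
        have hlt := Set.ncard_lt_ncard hss (Set.toFinite _)
        obtain ⟨x, hx⟩ := ih u b hub (by omega)
        exact ⟨x, hsub hx⟩
  intro c u hadj
  exact main (Branch G c u).ncard c u hadj le_rfl

end Aux

/-- let `v` and `v'` be distinct vertices of a stable tree marked by `X`,
joined by a path `p`; let `e` be the edge at `v` on this path (towards `p.getVert 1`) and
`e'` the edge at `v'` on this path (towards `p.getVert (p.length - 1)`). Then for every
edge at `v'` other than `e'` (towards a neighbor `w ≠ p.getVert (p.length - 1)`),
`B_{v'}(e'') ∩ X` is a strict subset of `B_v(e) ∩ X`. -/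
theorem branch_trace_strict_mono_path {X V : Type*} [Finite X] [Finite V]
    (G : SimpleGraph V) (m : X → V) (h : MarkedStableTree X V G m)
    (hX : 3 ≤ Nat.card X) (v v' : V) (hne : v ≠ v')
    (p : G.Walk v v') (hp : p.IsPath)
    (w : V) (hw : G.Adj v' w) (hwne : w ≠ p.getVert (p.length - 1)) :
    {x : X | m x ∈ Branch G v' w} ⊂ {x : X | m x ∈ Branch G v (p.getVert 1)} := by
  set s := p.getVert 1 with hs
  set pen := p.getVert (p.length - 1) with hpen
  have hlen : 0 < p.length := by
    rcases Nat.eq_zero_or_pos p.length with h0 | h0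
    · exact absurd (Walk.eq_of_length_eq_zero h0) hne
    · exact h0
  -- (i) v' ∈ Branch v s
  have hi : v' ∈ Branch G v s := end_mem_branch_getVert_one p hp hne
  -- (ii) v ∈ Branch v' pen
  have hrev : p.reverse.getVert 1 = pen := by
    rw [Walk.getVert_reverse]
  have hii : v ∈ Branch G v' pen := by
    rw [← hrev]
    exact end_mem_branch_getVert_one p.reverse hp.reverse (Ne.symm hne)
  -- (iii) Adj v' pen
  have hiii : G.Adj v' pen := by
    have := p.reverse.adj_getVert_succ (i := 0) (by rwa [Walk.length_reverse])
    rwa [Walk.getVert_zero, hrev] at this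
  -- (iv) v ∉ Branch v' w
  have hiv : v ∉ Branch G v' w := fun hvmem =>
    hwne (branch_dir_eq h.tree hw hiii hvmem hii)
  -- (v) inclusion of branches
  have hincl : Branch G v' w ⊆ Branch G v s :=
    branch_subset_branch hw hi hiv hne
  -- (vi) a third neighbor u of v'
  have hv'big : 2 ≤ (G.neighborSet v').ncard := by
    have hsub : ({w, pen} : Set V) ⊆ G.neighborSet v' := by
      rintro x (rfl | rfl)
      · exact hw
      · exact hiii
    calc 2 = ({w, pen} : Set V).ncard := (Set.ncard_pair hwne).symm
    _ ≤ (G.neighborSet v').ncard := Set.ncard_le_ncard hsub (Set.toFinite _)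
  have hv'notleaf : v' ∉ Set.range m := fun hmem => by
    have := (h.leaf_iff v').mpr hmem
    omega
  have hv'3 := h.stable v' hv'notleaf
  have hthird : ∃ u ∈ G.neighborSet v', u ≠ w ∧ u ≠ pen := by
    by_contra hcon
    push_neg at hcon
    have hsub : G.neighborSet v' ⊆ {w, pen} := by
      intro u hu
      rcases eq_or_ne u w with rfl | huw
      · exact Set.mem_insert _ _
      · simp [hcon u hu huw]
    have := Set.ncard_le_ncard hsub (Set.toFinite _)
    rw [Set.ncard_pair hwne] at this
    omega
  obtain ⟨u, hu, huw, hupen⟩ := hthird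
  have hadj_u : G.Adj v' u := hu
  -- a marked point in the branch of u
  obtain ⟨x, hx⟩ := exists_marked_in_branch h.tree h.leaf_iff h.stable v' u hadj_u
  have hvnotu : v ∉ Branch G v' u := fun hvmem =>
    hupen (branch_dir_eq h.tree hadj_u hiii hvmem hii)
  have hxin : m x ∈ Branch G v s :=
    branch_subset_branch hadj_u hi hvnotu hne hx
  have hxout : m x ∉ Branch G v' w := fun hmem =>
    huw (branch_dir_eq h.tree hadj_u hw hx hmem)
  rw [Set.ssubset_iff_of_subset
    (show {x : X | m x ∈ Branch G v' w} ⊆ {x : X | m x ∈ Branch G v s} from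
      fun y hy => hincl hy)]
  exact ⟨x, hxin, hxout⟩
end

section
/- For every stable tree T marked by X, the set ψ(T) = { P_v^X : v an internal vertex of T }, where P_v^X is the partition of X induced by the branches at v, is an admissible set of partitions of X: (1) every partition in ψ(T) has at least three blocks; (2) for every partition P in ψ(T) and every block B of P, either B is a singleton {x} with x ∈ X, or some partition in ψ(T) contains the block X − B; (3) any two distinct partitions in ψ(T) share no common block. -/
open SimpleGraph

/-- The partition `P_v^X` of `X` induced by the branches at a vertex `v`. -/
def blockPartition {X V : Type*} (G : SimpleGraph V) (m : X → V) (v : V) : Set (Set X) :=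
  {B | ∃ u, G.Adj v u ∧ B = {x : X | m x ∈ Branch G v u}}

/-- `ψ(T)`: the set of partitions of `X` induced at the internal vertices of `T`. -/
def psi {X V : Type*} (G : SimpleGraph V) (m : X → V) : Set (Set (Set X)) :=
  {P | ∃ v, v ∉ Set.range m ∧ P = blockPartition G m v}

/-- Admissibility of a set of partitions of `X`: each partition has at least three
blocks; each block is either a singleton or has its complement as a block of another
partition of the family; and distinct partitions share no block. -/
def Admissible {X : Type*} (Ps : Set (Set (Set X))) : Prop :=
  (∀ P ∈ Ps, 3 ≤ P.ncard) ∧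
  (∀ P ∈ Ps, ∀ B ∈ P, (∃ x : X, B = {x}) ∨ ∃ P' ∈ Ps, Bᶜ ∈ P') ∧
  (∀ P ∈ Ps, ∀ P' ∈ Ps, P ≠ P' → P ∩ P' = ∅)

section Aux

variable {V : Type*} {G : SimpleGraph V} {v u w y u1 u2 v' : V}

lemma path_unique' (hA : G.IsAcyclic) {a b : V} {p q : G.Walk a b} (hp : p.IsPath)
    (hq : q.IsPath) : p = q :=
  congrArg Subtype.val (hA.path_unique ⟨p, hp⟩ ⟨q, hq⟩)

lemma mem_branch_self (h : v ≠ u) : u ∈ Branch G v u :=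
  ⟨Walk.nil, by simpa using h⟩

lemma self_not_mem_branch : v ∉ Branch G v u :=
  fun ⟨p, hp⟩ => hp p.end_mem_support

lemma adj_mem_branch (hw : w ∈ Branch G v u) (ha : G.Adj w y) (hy : y ≠ v) :
    y ∈ Branch G v u := by
  classical
  obtain ⟨p, hp⟩ := hw
  refine ⟨p.concat ha, ?_⟩
  rw [Walk.support_concat]
  simp [hp, Ne.symm hy]

lemma walk_subset_branch {p : G.Walk u w} (hp : v ∉ p.support) :
    ∀ z ∈ p.support, z ∈ Branch G v u := by
  classical
  exact fun z hz => ⟨p.takeUntil z hz, fun hv => hp (p.support_takeUntil_subset hz hv)⟩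

lemma branch_disjoint (hT : G.IsTree) (h1 : G.Adj v u1) (h2 : G.Adj v u2) (hne : u1 ≠ u2) :
    Branch G v u1 ∩ Branch G v u2 = ∅ := by
  classical
  ext w
  simp only [Set.mem_inter_iff, Set.mem_empty_iff_false, iff_false, not_and]
  rintro ⟨p, hp⟩ ⟨q, hq⟩
  have hr : v ∉ (p.append q.reverse).support := by
    rw [Walk.mem_support_append_iff]
    simp [Walk.support_reverse, hp, hq]
  have ht : (Walk.cons h1.symm (Walk.cons h2 Walk.nil) : G.Walk u1 u2).IsPath := by
    simp [Walk.isPath_def, h1.ne', h2.ne, hne]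
  have heq := path_unique' hT.2 (p.append q.reverse).bypass_isPath ht
  have hv : v ∈ (p.append q.reverse).bypass.support := by rw [heq]; simp
  exact hr ((p.append q.reverse).support_bypass_subset hv)

lemma not_mem_branch_iff (hT : G.IsTree) (h : G.Adj v u) (w : V) :
    w ∉ Branch G v u ↔ w ∈ Branch G u v := by
  classical
  classical
  constructor
  · intro hw
    obtain ⟨p, hp, -⟩ := hT.existsUnique_path v w
    by_cases hu : u ∈ p.support
    · exfalso
      apply hw
      refine ⟨p.dropUntil u hu, fun hv => ?_⟩
      have heq : p.support = (p.takeUntil u hu).support ++ (p.dropUntil u hu).support.tail := by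
        rw [← Walk.support_append, p.take_spec hu]
      have hnodup : p.support.Nodup := hp.support_nodup
      rw [heq] at hnodup
      have hdis := List.disjoint_of_nodup_append hnodup
      have hv' : v ∈ (p.dropUntil u hu).support.tail := by
        have hc := (p.dropUntil u hu).support_eq_cons
        rw [hc] at hv
        rcases List.mem_cons.1 hv with hv | hv
        · exact absurd hv h.ne
        · exact hv
      exact hdis (p.takeUntil u hu).start_mem_support hv'
    · exact ⟨p, hu⟩
  · rintro ⟨q, hq⟩ ⟨p, hp⟩
    have h1 : (Walk.cons h p.bypass).IsPath :=
      Walk.IsPath.cons p.bypass_isPath (fun hv => hp (p.support_bypass_subset hv))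
    have heq := path_unique' hT.2 h1 q.bypass_isPath
    have hu : u ∈ (Walk.cons h p.bypass).support := by simp
    rw [heq] at hu
    exact hq (q.support_bypass_subset hu)

lemma exists_branch (hT : G.IsTree) (hw : w ≠ v) : ∃ u, G.Adj v u ∧ w ∈ Branch G v u := by
  classical
  classical
  obtain ⟨p, hp, -⟩ := hT.existsUnique_path v w
  cases p with
  | nil => exact absurd rfl hw.symm
  | cons ha p' => exact ⟨_, ha, ⟨p', ((Walk.cons_isPath_iff _ _).1 hp).2⟩⟩

lemma branch_subset (hT : G.IsTree) {u'' : V} (hv' : v' ∈ Branch G v u) (ha : G.Adj v' u'')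
    (hnv : v ∉ Branch G v' u'') : Branch G v' u'' ⊆ Branch G v u := by
  classical
  have hu''v : u'' ≠ v := by rintro rfl; exact hnv (mem_branch_self ha.ne)
  have hu'' : u'' ∈ Branch G v u := adj_mem_branch hv' ha hu''v
  rintro w ⟨q, hq⟩
  have hvq : v ∉ q.support := fun hvq => hnv (walk_subset_branch hq v hvq)
  obtain ⟨p, hp⟩ := hu''
  refine ⟨p.append q, ?_⟩
  rw [Walk.mem_support_append_iff]
  simp [hp, hvq]

lemma branch_has_leaf {X : Type*} {m : X → V} [Finite V]
    (h : MarkedStableTree X V G m) (hadj : G.Adj v u) : ∃ x : X, m x ∈ Branch G v u := by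
  classical
  have hT := h.tree
  obtain ⟨w, hw, hmax⟩ := Set.exists_max_image (Branch G v u) (G.dist v) (Set.toFinite _)
    ⟨u, mem_branch_self hadj.ne⟩
  suffices hwm : w ∈ Set.range m by
    obtain ⟨x, rfl⟩ := hwm; exact ⟨x, hw⟩
  by_contra hwm
  have hdeg := h.stable w hwm
  have hwv : w ≠ v := fun e => self_not_mem_branch (e ▸ hw)
  obtain ⟨p0, hp0, hlen0⟩ := hT.1.exists_path_of_dist v w
  obtain ⟨q, hq, -⟩ := hT.existsUnique_path w v
  cases q with
  | nil => exact hwv rfl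
  | @cons _ z _ ha r =>
    have hr : r.IsPath ∧ w ∉ r.support := (Walk.cons_isPath_iff _ _).1 hq
    set p : G.Walk v w := (Walk.cons ha r).reverse with hpdef
    have hpP : p.IsPath := hq.reverse
    have hp0p : p0 = p := path_unique' hT.2 hp0 hpP
    have hlen : p.length = G.dist v w := by rw [← hp0p]; exact hlen0
    have hnsub : ¬ (G.neighborSet w ⊆ {z}) := by
      intro hsub
      have hle := Set.ncard_le_ncard hsub (Set.toFinite _)
      simp only [Set.ncard_singleton] at hle
      omega
    obtain ⟨y, hymem, hyz⟩ := Set.not_subset.1 hnsub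
    have hy : G.Adj w y := hymem
    rw [Set.mem_singleton_iff] at hyz
    have hynp : y ∉ p.support := by
      intro hyp
      have hyr : y ∈ r.support := by
        rw [hpdef, Walk.support_reverse, List.mem_reverse, Walk.support_cons] at hyp
        rcases List.mem_cons.1 hyp with hyp | hyp
        · exact absurd hyp hy.ne'
        · exact hyp
      have h1 : (Walk.cons ha (r.takeUntil y hyr)).reverse.IsPath := by
        refine Walk.IsPath.reverse (Walk.IsPath.cons (hr.1.takeUntil hyr) ?_)
        exact fun hc => hr.2 (r.support_takeUntil_subset hyr hc)
      have h2 : (Walk.cons hy.symm Walk.nil : G.Walk y w).IsPath := by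
        simp [Walk.isPath_def, hy.ne']
      have heq := path_unique' hT.2 h1 h2
      have hlen2 := congrArg Walk.length heq
      rw [Walk.length_reverse] at hlen2
      simp only [Walk.length_cons, Walk.length_nil] at hlen2
      have h0 : (r.takeUntil y hyr).length = 0 := by omega
      exact hyz (Walk.eq_of_length_eq_zero h0).symm
    have hyv : y ≠ v := fun e => hynp (e ▸ p.start_mem_support)
    have hyB : y ∈ Branch G v u := adj_mem_branch hw hy hyv
    have hPP : (p.concat hy).IsPath := by
      rw [Walk.isPath_def, Walk.support_concat]
      have := hpP.support_nodup
      simp [List.nodup_append, this, hynp]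
      exact fun a ha e => hynp (e ▸ ha)
    have hdy : G.dist v y = p.length + 1 := by
      obtain ⟨p1, hp1, hlen1⟩ := hT.1.exists_path_of_dist v y
      have heq := path_unique' hT.2 hp1 hPP
      rw [← hlen1, heq, Walk.length_concat]
    have hle := hmax y hyB
    rw [hdy, hlen] at * <;> omega

lemma branch_leaf_eq {X : Type*} {m : X → V} (h : MarkedStableTree X V G m) {x : X}
    (hadj : G.Adj v (m x)) : Branch G v (m x) = {m x} := by
  classical
  have hns : G.neighborSet (m x) = {v} := by
    have h1 : (G.neighborSet (m x)).ncard = 1 := (h.leaf_iff _).2 ⟨x, rfl⟩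
    obtain ⟨a, ha⟩ := Set.ncard_eq_one.1 h1
    have hv : v ∈ G.neighborSet (m x) := hadj.symm
    rw [ha] at hv ⊢
    rw [Set.mem_singleton_iff] at hv
    rw [hv]
  ext w
  simp only [Set.mem_singleton_iff]
  constructor
  · rintro ⟨p, hp⟩
    cases p with
    | nil => rfl
    | @cons _ z _ ha r =>
      exfalso
      have hz : z ∈ G.neighborSet (m x) := ha
      rw [hns, Set.mem_singleton_iff] at hz
      apply hp
      rw [Walk.support_cons]
      exact List.mem_cons_of_mem _ (hz ▸ r.start_mem_support)
  · rintro rfl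
    exact mem_branch_self hadj.ne

lemma blockPartition_eq {X : Type*} (G : SimpleGraph V) (m : X → V) (v : V) :
    blockPartition G m v = (fun u => {x : X | m x ∈ Branch G v u}) '' G.neighborSet v := by
  classical
  ext B
  constructor
  · rintro ⟨u, h1, h2⟩; exact ⟨u, h1, h2.symm⟩
  · rintro ⟨u, h1, h2⟩; exact ⟨u, h1, h2.symm⟩

lemma auxA {X : Type*} {m : X → V} [Finite V] (h : MarkedStableTree X V G m) {u' : V}
    (hv'm : v' ∉ Set.range m) (hu : G.Adj v u) (hu' : G.Adj v' u') (hvv' : v ≠ v')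
    (hc : v' ∈ Branch G v u)
    (hB : {x | m x ∈ Branch G v u} = {x | m x ∈ Branch G v' u'}) : False := by
  classical
  have hT := h.tree
  obtain ⟨a', ha', hva'⟩ := exists_branch hT hvv'
  have hdeg := h.stable v' hv'm
  have hnsub : ¬ (G.neighborSet v' ⊆ {u', a'}) := by
    intro hsub
    have h2 : ({u', a'} : Set V).ncard ≤ 2 := by
      refine le_trans (Set.ncard_insert_le _ _) ?_
      simp
    have := Set.ncard_le_ncard hsub (Set.toFinite _)
    omega
  obtain ⟨b', hb'mem, hb'not⟩ := Set.not_subset.1 hnsub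
  have hb'adj : G.Adj v' b' := hb'mem
  simp only [Set.mem_insert_iff, Set.mem_singleton_iff, not_or] at hb'not
  obtain ⟨hbu', hba'⟩ := hb'not
  have hvb' : v ∉ Branch G v' b' := by
    intro hv
    have hdis := branch_disjoint hT hb'adj ha' hba'
    have : v ∈ (∅ : Set V) := hdis ▸ Set.mem_inter hv hva'
    exact this
  have hsub : Branch G v' b' ⊆ Branch G v u := branch_subset hT hc hb'adj hvb'
  obtain ⟨x, hx⟩ := branch_has_leaf h hb'adj
  have hx1 : m x ∈ Branch G v u := hsub hx
  have hx2 : m x ∈ Branch G v' u' := by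
    have hm : x ∈ {x | m x ∈ Branch G v u} := hx1
    rw [hB] at hm
    exact hm
  have hdis := branch_disjoint hT hb'adj hu' hbu'
  have : m x ∈ (∅ : Set V) := hdis ▸ Set.mem_inter hx hx2
  exact this

end Aux

/-- for every stable tree `T` marked by `X`, the set `ψ(T)` of branch
partitions at internal vertices is an admissible set of partitions of `X`. -/
theorem psi_admissible {X V : Type*} [Finite X] [Finite V]
    (G : SimpleGraph V) (m : X → V) (h : MarkedStableTree X V G m)
    (hX : 3 ≤ Nat.card X) :
    Admissible (psi G m) := by
  classical
  have hT := h.tree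
  refine ⟨?_, ?_, ?_⟩
  · rintro P ⟨v, hv, rfl⟩
    rw [blockPartition_eq]
    have hinj : Set.InjOn (fun u => {x : X | m x ∈ Branch G v u}) (G.neighborSet v) := by
      intro u1 h1 u2 h2 heq
      have heq' : {x : X | m x ∈ Branch G v u1} = {x : X | m x ∈ Branch G v u2} := heq
      by_contra hne
      obtain ⟨x, hx⟩ := branch_has_leaf h h1
      have hx2 : m x ∈ Branch G v u2 := by
        have hm : x ∈ {x | m x ∈ Branch G v u1} := hx
        rw [heq'] at hm
        exact hm
      have hdis := branch_disjoint hT h1 h2 hne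
      have : m x ∈ (∅ : Set V) := hdis ▸ Set.mem_inter hx hx2
      exact this
    rw [Set.ncard_image_of_injOn hinj]
    exact h.stable v hv
  · rintro P ⟨v, hv, rfl⟩ B ⟨u, hu, rfl⟩
    by_cases hum : u ∈ Set.range m
    · left
      obtain ⟨x, rfl⟩ := hum
      refine ⟨x, ?_⟩
      ext y
      simp [branch_leaf_eq h hu, h.inj.eq_iff]
    · right
      refine ⟨blockPartition G m u, ⟨u, hum, rfl⟩, ⟨v, hu.symm, ?_⟩⟩
      ext y
      simp only [Set.mem_compl_iff, Set.mem_setOf_eq]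
      exact not_mem_branch_iff hT hu (m y)
  · rintro P ⟨v, hv, rfl⟩ P' ⟨v', hv', rfl⟩ hne
    have hvv' : v ≠ v' := fun e => hne (by rw [e])
    ext B
    simp only [Set.mem_inter_iff, Set.mem_empty_iff_false, iff_false, not_and]
    rintro ⟨u, hu, rfl⟩ ⟨u', hu', hB⟩
    by_cases hc1 : v' ∈ Branch G v u
    · exact auxA h hv' hu hu' hvv' hc1 hB
    · by_cases hc2 : v ∈ Branch G v' u'
      · exact auxA h hv hu' hu hvv'.symm hc2 hB.symm
      · obtain ⟨a', ha', hva'⟩ := exists_branch hT hvv'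
        have hua' : u' ≠ a' := fun e => hc2 (e ▸ hva')
        have hsub : Branch G v u ⊆ Branch G v' a' := branch_subset hT hva' hu hc1
        obtain ⟨x, hx⟩ := branch_has_leaf h hu
        have hx' : m x ∈ Branch G v' u' := by
          have hm : x ∈ {x | m x ∈ Branch G v u} := hx
          rw [hB] at hm
          exact hm
        have hdis := branch_disjoint hT hu' ha' hua'
        have : m x ∈ (∅ : Set V) := hdis ▸ Set.mem_inter hx' (hsub hx)
        exact this
end
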